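/- For every mean μ > 0 and variance v ≥ 0, the expectation of the Sigmoid function under the Gaussian distribution N(μ, v) is strictly greater than one half: ∫ S(x) d(N(μ, v))(x) > 1/2, where S(x) = 1/(1 + e^{−x}) and N(μ, v) denotes the Gaussian probability measure on ℝ with mean μ and variance v. -/

import Mathlib

open MeasureTheory ProbabilityTheory

private lemma sigmoid_pos_denom (x : ℝ) : 0 < 1 + Real.exp (-x) := by positivity

private lemma sigmoid_cont : Continuous (fun x : ℝ => 1 / (1 + Real.exp (-x))) := by
  apply Continuous.div continuous_const
  · exact continuous_const.add (Real.continuous_exp.comp continuous_neg)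
  · exact fun x => (sigmoid_pos_denom x).ne'

private lemma sigmoid_add_neg (x : ℝ) :
    1 / (1 + Real.exp (-x)) + 1 / (1 + Real.exp (-(-x))) = 1 := by
  have h1 := sigmoid_pos_denom x
  have h2 := sigmoid_pos_denom (-x)
  have he : Real.exp (-x) * Real.exp x = 1 := by
    rw [← Real.exp_add]; simp
  field_simp
  ring_nf
  nlinarith [he]

private lemma sigmoid_strictMono : StrictMono (fun x : ℝ => 1 / (1 + Real.exp (-x))) := by
  intro a b hab
  have h1 := sigmoid_pos_denom a
  have h2 := sigmoid_pos_denom b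
  have : Real.exp (-b) < Real.exp (-a) := Real.exp_lt_exp.2 (by linarith)
  rw [div_lt_div_iff₀ h1 h2]
  nlinarith

private lemma sigmoid_integrable (ν : Measure ℝ) [IsProbabilityMeasure ν] :
    Integrable (fun x : ℝ => 1 / (1 + Real.exp (-x))) ν := by
  refine (integrable_const (1 : ℝ)).mono' sigmoid_cont.aestronglyMeasurable ?_
  filter_upwards with x
  rw [Real.norm_eq_abs, abs_of_nonneg (by positivity)]
  rw [div_le_one (sigmoid_pos_denom x)]
  nlinarith [Real.exp_pos (-x)]

/-- For every mean `μ > 0` and variance `v ≥ 0`, the expectation of the Sigmoid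
function `S x = 1 / (1 + exp (-x))` under the Gaussian distribution `N(μ, v)` is
strictly greater than `1/2`. -/
theorem sigmoid_gaussian_positive_mean_expectation (μ : ℝ) (hμ : 0 < μ) (v : NNReal) :
    ∫ x, 1 / (1 + Real.exp (-x)) ∂(gaussianReal μ v) > 1 / 2 := by
  set S : ℝ → ℝ := fun x => 1 / (1 + Real.exp (-x)) with hS
  set ν := gaussianReal μ v with hν
  -- reflection x ↦ 2μ - x preserves ν
  have hmap : ν.map (fun x => 2 * μ + (-1) * x) = ν := by
    show Measure.map (fun x => 2 * μ + (-1) * x) (gaussianReal μ v) = gaussianReal μ v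
    have h1 : ν.map ((-1 : ℝ) * ·) = gaussianReal (-μ) v := by
      rw [hν, gaussianReal_map_const_mul]
      congr 1
      · ring
      · ext; simp
    have h2 : (gaussianReal (-μ) v).map ((2 * μ) + ·) = gaussianReal μ v := by
      rw [gaussianReal_map_const_add]; congr 1; ring
    have hc : (fun x : ℝ => 2 * μ + (-1) * x)
        = (fun x : ℝ => 2 * μ + x) ∘ (fun x : ℝ => (-1) * x) := by
      funext x; simp
    rw [hc, ← Measure.map_map (by fun_prop) (by fun_prop), h1, h2]
  have hSm : Continuous S := sigmoid_cont
  have hint : Integrable S ν := sigmoid_integrable ν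
  have hfe : (fun x => S (2 * μ - x)) = S ∘ (fun x : ℝ => 2 * μ + (-1) * x) := by
    funext x
    show S (2 * μ - x) = S (2 * μ + (-1) * x)
    congr 1; ring
  have hint2 : Integrable (fun x => S (2 * μ - x)) ν := by
    have h := hint
    rw [← hmap] at h
    rw [hfe]
    exact h.comp_measurable (by fun_prop)
  have heq : ∫ x, S x ∂ν = ∫ x, S (2 * μ - x) ∂ν := by
    conv_lhs => rw [← hmap]
    rw [integral_map (by fun_prop) hSm.aestronglyMeasurable]
    congr 1 with x
    congr 1
    ring
  -- g := S x + S (2μ - x) - 1 is positive everywhere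
  have hgpos : ∀ x, 0 < S x + S (2 * μ - x) - 1 := by
    intro x
    have h1 : S (-x) < S (2 * μ - x) := sigmoid_strictMono (by linarith)
    have h2 := sigmoid_add_neg x
    simp only [hS] at h1 h2 ⊢
    linarith
  have hadd : Integrable (fun x => S x + S (2 * μ - x)) ν := hint.add hint2
  have hgint : Integrable (fun x => S x + S (2 * μ - x) - 1) ν :=
    hadd.sub (integrable_const 1)
  have hpos : 0 < ∫ x, (S x + S (2 * μ - x) - 1) ∂ν := by
    rw [integral_pos_iff_support_of_nonneg (fun x => (hgpos x).le) hgint]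
    have : Function.support (fun x => S x + S (2 * μ - x) - 1) = Set.univ := by
      ext x; simp [Function.support, (hgpos x).ne']
    rw [this]
    simp
  rw [integral_sub hadd (integrable_const 1), integral_add hint hint2,
    integral_const] at hpos
  simp only [measure_univ, probReal_univ, ENNReal.toReal_one, smul_eq_mul, one_mul] at hpos
  rw [← heq] at hpos
  show 1 / 2 < ∫ x, S x ∂ν
  linarith
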